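/- Let (Ω, ℱ, P) be a probability space, let p ∈ [0,1], let (𝔉_k)_{k∈ℕ} be a sequence of sub-σ-algebras of ℱ, and let (U_k)_{k∈ℕ} be a sequence of ℱ-measurable events. Assume: (i) for every k ∈ ℕ, the event ⋂_{i<k} U_iᶜ is measurable with respect to 𝔉_k; and (ii) for every k ∈ ℕ, P-almost surely E[1_{U_kᶜ} | 𝔉_k] ≤ 1 − p. Then for every k ∈ ℕ, P( ⋂_{i<k} U_iᶜ ) ≤ (1 − p)^k. -/

import Mathlib

open MeasureTheory

/-- Quantitative core of the Inevitability Theorem: if at each step `k` the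
conditional probability of `U k` failing, given `𝔉 k`, is at most `1 - p`,
and the event that the first `k` events all fail is `𝔉 k`-measurable,
then the probability that none of the first `k` events occurs decays
geometrically. -/
theorem geometric_decay_of_conditional_bound
    {Ω : Type*} {mΩ : MeasurableSpace Ω} (P : Measure Ω) [IsProbabilityMeasure P]
    (p : ℝ) (hp0 : 0 ≤ p) (hp1 : p ≤ 1)
    (F : ℕ → MeasurableSpace Ω) (hF : ∀ k, F k ≤ mΩ)
    (U : ℕ → Set Ω) (hU : ∀ k, MeasurableSet (U k))
    (hadapt : ∀ k, MeasurableSet[F k] (⋂ i ∈ Finset.range k, (U i)ᶜ))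
    (hcond : ∀ k, ∀ᵐ ω ∂P,
      (P[Set.indicator ((U k)ᶜ) (fun _ => (1 : ℝ)) | F k]) ω ≤ 1 - p) :
    ∀ k : ℕ, P (⋂ i ∈ Finset.range k, (U i)ᶜ) ≤ ENNReal.ofReal ((1 - p) ^ k) := by
  set A : ℕ → Set Ω := fun k => ⋂ i ∈ Finset.range k, (U i)ᶜ with hA
  have hAmeas : ∀ k, MeasurableSet (A k) := fun k => hF k _ (hadapt k)
  have h1p : 0 ≤ 1 - p := by linarith
  intro k
  induction k with
  | zero => simp [hA]
  | succ k ih =>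
    have hsucc : A (k + 1) = (U k)ᶜ ∩ A k := by
      rw [hA]; simp only [Finset.range_add_one, Finset.set_biInter_insert]
    have hint : Integrable (Set.indicator ((U k)ᶜ) (fun _ => (1 : ℝ))) P :=
      (integrable_const (1 : ℝ)).indicator (hU k).compl
    have key : ∫ x in A k, (P[Set.indicator ((U k)ᶜ) (fun _ => (1 : ℝ)) | F k]) x ∂P
        = ∫ x in A k, Set.indicator ((U k)ᶜ) (fun _ => (1 : ℝ)) x ∂P :=
      setIntegral_condExp (hF k) hint (hadapt k)
    have hval : ∫ x in A k, Set.indicator ((U k)ᶜ) (fun _ => (1 : ℝ)) x ∂P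
        = (P (A (k + 1))).toReal := by
      rw [hsucc, setIntegral_indicator (hU k).compl]
      simp [Measure.restrict_apply (hU k).compl, Set.inter_comm, Measure.real]
    have hbound : ∫ x in A k, (P[Set.indicator ((U k)ᶜ) (fun _ => (1 : ℝ)) | F k]) x ∂P
        ≤ (1 - p) * (P (A k)).toReal := by
      calc ∫ x in A k, (P[Set.indicator ((U k)ᶜ) (fun _ => (1 : ℝ)) | F k]) x ∂P
          ≤ ∫ _x in A k, (1 - p) ∂P := by
            refine integral_mono_ae (integrable_condExp.restrict) (integrable_const _) ?_
            exact ae_restrict_of_ae (hcond k)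
        _ = (1 - p) * (P (A k)).toReal := by
            simp [mul_comm, Measure.real]
    have hfin : P (A (k + 1)) ≠ ⊤ := measure_ne_top P _
    have hreal : (P (A (k + 1))).toReal ≤ (1 - p) * (P (A k)).toReal := by
      rw [← hval, ← key]; exact hbound
    have ihreal : (P (A k)).toReal ≤ (1 - p) ^ k := by
      have := ih
      rw [← ENNReal.ofReal_toReal (measure_ne_top P (A k))] at this
      exact (ENNReal.ofReal_le_ofReal_iff (by positivity)).mp this
    calc P (A (k + 1)) = ENNReal.ofReal ((P (A (k + 1))).toReal) :=
          (ENNReal.ofReal_toReal hfin).symm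
      _ ≤ ENNReal.ofReal ((1 - p) ^ (k + 1)) := by
          apply ENNReal.ofReal_le_ofReal
          calc (P (A (k + 1))).toReal ≤ (1 - p) * (P (A k)).toReal := hreal
            _ ≤ (1 - p) * (1 - p) ^ k := by
                exact mul_le_mul_of_nonneg_left ihreal h1p
            _ = (1 - p) ^ (k + 1) := (pow_succ' _ _).symm
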